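/- Set ℓ = a·(2q)⁻¹ in ZMod p. Then the kernel of T is spanned over 𝔽_p by the two vectors e₅ − e₂ and e₆ − 4ℓ·e₄ + 2ℓ·e₃ + (2ℓ−1)·e₂ − (1 − q + 2a)ℓ·e₁. (This is the explicit kernel basis of Theorem 4.4, with corrected coefficients; the two vectors correspond to the divisor classes Δ_{F(1+α)/2} − E₂ and Δ_{(a+F)α/q} − 4ℓΔ_{(1+α)/2} + 2ℓΔ + (2ℓ−1)E₂ − (1−q+2a)ℓE₁ in Ker c₁.) -/

import Mathlib

set_option maxHeartbeats 1000000 in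
/-- In the setting of the previous statement, set `ℓ = a·(2q)⁻¹` in `ZMod p`.
Then the kernel of `T` is spanned over `𝔽_p` by the two vectors
`e₅ - e₂` and `e₆ - 4ℓ·e₄ + 2ℓ·e₃ + (2ℓ-1)·e₂ - (1-q+2a)ℓ·e₁`
(standard basis vectors `e₁, …, e₆` of `(ZMod p)⁶`). -/
theorem kernel_chernClassMap_basis (p : ℕ) [Fact p.Prime] (hpodd : Odd p)
    (K : Type*) [Field K] [CharP K p] [Algebra (ZMod p) K]
    (q a : ℤ) (hq : ¬ (p : ℤ) ∣ q) (s : K) (hs : s ^ 2 = -(q : K))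
    (T : (Fin 6 → ZMod p) →ₗ[ZMod p] (Fin 4 → K))
    (hT : ∀ n : Fin 6, T (Pi.single n 1) =
      ![![0, 0, 0, 1], ![1, 0, 0, 0], ![1, 1, 1, 1],
        ![1, (1 + s) / 2, (1 - s) / 2, (1 + (q : K)) / 4],
        ![1, 0, 0, 0],
        ![1, (a : K) * s / (q : K), -((a : K) * s / (q : K)), (a : K) ^ 2 / (q : K)]] n) :
    let ℓ : ZMod p := (a : ZMod p) * (2 * (q : ZMod p))⁻¹
    let e : Fin 6 → (Fin 6 → ZMod p) := fun n => Pi.single n 1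
    LinearMap.ker T = Submodule.span (ZMod p)
      {e 4 - e 1,
       e 5 - (4 * ℓ) • e 3 + (2 * ℓ) • e 2 + (2 * ℓ - 1) • e 1
         - ((1 - (q : ZMod p) + 2 * (a : ZMod p)) * ℓ) • e 0} := by
  intro ℓ e
  have hp2 : (2 : ZMod p) ≠ 0 := by
    have hp := (Fact.out : p.Prime)
    have hne : p ≠ 2 := by rintro rfl; exact (Nat.not_odd_iff_even.mpr (by norm_num)) hpodd
    intro h
    have : ((2:ℕ) : ZMod p) = 0 := by norm_cast
    exact hne ((Nat.prime_dvd_prime_iff_eq hp Nat.prime_two).mp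
      ((ZMod.natCast_eq_zero_iff 2 p).mp this))
  have hqz : ((q:ℤ) : ZMod p) ≠ 0 := fun h => hq ((ZMod.intCast_zmod_eq_zero_iff_dvd q p).mp h)
  have hφ : Function.Injective (algebraMap (ZMod p) K) := (algebraMap (ZMod p) K).injective
  have hK2 : (2:K) ≠ 0 := by
    have h2 : algebraMap (ZMod p) K 2 = 2 := map_ofNat _ 2
    rw [← h2]; simpa using fun h => hp2 (hφ (by simpa using h))
  have hKq : ((q:ℤ):K) ≠ 0 := by
    have h2 : algebraMap (ZMod p) K ((q:ℤ):ZMod p) = ((q:ℤ):K) := map_intCast _ q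
    rw [← h2]; exact fun h => hqz (hφ (by simpa using h))
  have hs0 : s ≠ 0 := by
    intro h; rw [h] at hs; apply hKq; rw [← neg_eq_zero, ← hs]; ring
  have hℓ : algebraMap (ZMod p) K ℓ = (a:K) / (2 * (q:K)) := by
    have h2q : ((2:ZMod p) * (q:ZMod p)) ≠ 0 := mul_ne_zero hp2 hqz
    rw [show ℓ = (a : ZMod p) * (2 * (q : ZMod p))⁻¹ from rfl]
    rw [map_mul, map_inv₀, map_mul, map_intCast, map_ofNat, map_intCast, div_eq_mul_inv]
  have hU0 : T (Pi.single 0 1) = ![0, 0, 0, 1] := (hT 0).trans rfl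
  have hU1 : T (Pi.single 1 1) = ![1, 0, 0, 0] := (hT 1).trans rfl
  have hU2 : T (Pi.single 2 1) = ![1, 1, 1, 1] := (hT 2).trans rfl
  have hU3 : T (Pi.single 3 1) = ![1, (1 + s) / 2, (1 - s) / 2, (1 + (q : K)) / 4] :=
    (hT 3).trans rfl
  have hU4 : T (Pi.single 4 1) = ![1, 0, 0, 0] := (hT 4).trans rfl
  have hU5 : T (Pi.single 5 1) =
      ![1, (a : K) * s / (q : K), -((a : K) * s / (q : K)), (a : K) ^ 2 / (q : K)] :=
    (hT 5).trans rfl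
  have hsum : ∀ x : Fin 6 → ZMod p, T x = ∑ n, x n • T (Pi.single n 1) := by
    intro x
    conv_lhs => rw [show x = ∑ n, Pi.single n (x n) from (Finset.univ_sum_single x).symm]
    rw [map_sum]
    refine Finset.sum_congr rfl fun n _ => ?_
    have : Pi.single n (x n) = x n • (Pi.single n (1:ZMod p) : Fin 6 → ZMod p) := by
      rw [← Pi.single_smul, smul_eq_mul, mul_one]
    rw [this, map_smul]
  apply le_antisymm
  · intro x hx
    rw [LinearMap.mem_ker, hsum x, Fin.sum_univ_six] at hx
    rw [show (0:Fin 6) = 0 from rfl] at hx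
    rw [hU0, hU1, hU2, hU3, hU4, hU5] at hx
    have E0 := congrFun hx 0
    have E1 := congrFun hx 1
    have E2 := congrFun hx 2
    have E3 := congrFun hx 3
    simp only [Pi.add_apply, Pi.smul_apply, Pi.zero_apply, Matrix.cons_val_zero,
      Matrix.cons_val_one, Matrix.head_cons, Matrix.cons_val_two, Matrix.tail_cons,
      Matrix.cons_val_three] at E0 E1 E2 E3
    simp only [Algebra.smul_def, smul_eq_mul, mul_zero, mul_one, zero_add,
      add_zero] at E0 E1 E2 E3
    have h2qK : (2*(q:K)) ≠ 0 := mul_ne_zero hK2 hKq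
    have hK4 : (4:K) ≠ 0 := by
      have h4 : (4:K) = 2 * 2 := by norm_num
      rw [h4]; exact mul_ne_zero hK2 hK2
    field_simp at E1 E2 E3
    have hx3 : x 3 = -(4*ℓ) * x 5 := by
      apply hφ
      rw [map_mul, map_neg, map_mul, map_ofNat, hℓ]
      apply mul_right_cancel₀ hs0
      field_simp
      apply mul_left_cancel₀ hs0
      linear_combination E1 - E2
    have hx2 : x 2 = (2*ℓ) * x 5 := by
      apply hφ
      rw [map_mul, map_mul, map_ofNat, hℓ]
      apply mul_right_cancel₀ hs0
      apply mul_right_cancel₀ hK2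
      field_simp
      apply mul_left_cancel₀ (mul_ne_zero hs0 hK4)
      linear_combination s*(E1+E2) - E1 + E2
    have h2qZ : (2 * (q:ZMod p)) ≠ 0 := mul_ne_zero hp2 hqz
    have hℓZ : ℓ * (2 * (q:ZMod p)) = (a:ZMod p) := by
      show (a:ZMod p) * (2*(q:ZMod p))⁻¹ * (2*(q:ZMod p)) = (a:ZMod p)
      rw [mul_assoc, inv_mul_cancel₀ h2qZ, mul_one]
    have hx3q : x 3 * (q:ZMod p) = -(2*(a:ZMod p)) * x 5 := by
      linear_combination (q:ZMod p) * hx3 - 2 * x 5 * hℓZ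
    have hx2q : x 2 * (q:ZMod p) = (a:ZMod p) * x 5 := by
      linear_combination (q:ZMod p) * hx2 + x 5 * hℓZ
    have hsum0 : x 1 + x 2 + x 3 + x 4 + x 5 = 0 := by
      apply hφ
      simpa only [map_add, map_zero] using E0
    have hx1 : x 1 = -(x 4) + (2*ℓ - 1) * x 5 := by
      linear_combination hsum0 - hx2 - hx3
    have hE3Z : x 0 * (4 * (q:ZMod p)) + x 2 * (4 * (q:ZMod p))
        + x 3 * ((1 + (q:ZMod p)) * (q:ZMod p)) + x 5 * (4 * (a:ZMod p)^2) = 0 := by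
      apply hφ
      simp only [map_add, map_mul, map_ofNat, map_intCast, map_pow, map_one, map_zero]
      linear_combination E3
    have h4qZ : (4 * (q:ZMod p)) ≠ 0 := by
      have h4 : (4:ZMod p) = 2 * 2 := by norm_num
      exact mul_ne_zero (by rw [h4]; exact mul_ne_zero hp2 hp2) hqz
    have hx0 : x 0 = -((1 - (q:ZMod p) + 2 * (a:ZMod p)) * ℓ) * x 5 := by
      apply mul_left_cancel₀ h4qZ
      linear_combination hE3Z - 4 * hx2q - (1 + (q:ZMod p)) * hx3q +
        2 * (1 - (q:ZMod p) + 2 * (a:ZMod p)) * x 5 * hℓZ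
    have hrep : x = x 4 • (e 4 - e 1) +
        x 5 • (e 5 - (4 * ℓ) • e 3 + (2 * ℓ) • e 2 + (2 * ℓ - 1) • e 1
          - ((1 - (q : ZMod p) + 2 * (a : ZMod p)) * ℓ) • e 0) := by
      funext n
      fin_cases n <;>
      · simp [e, Pi.single_apply, hx0, hx1, hx2, hx3]
        try ring
    rw [hrep]
    exact Submodule.add_mem _
      (Submodule.smul_mem _ _ (Submodule.subset_span (Set.mem_insert _ _)))
      (Submodule.smul_mem _ _ (Submodule.subset_span (Set.mem_insert_of_mem _ rfl)))
  · rw [Submodule.span_le]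
    rintro y hy
    simp only [Set.mem_insert_iff, Set.mem_singleton_iff] at hy
    rcases hy with rfl | rfl
    · simp only [SetLike.mem_coe, LinearMap.mem_ker, map_sub, e, hU4, hU1, sub_self]
    · simp only [SetLike.mem_coe, LinearMap.mem_ker, map_sub, map_add, map_smul, e,
        hU0, hU1, hU2, hU3, hU5]
      funext j
      fin_cases j <;>
      · simp only [Pi.sub_apply, Pi.add_apply, Pi.smul_apply, Pi.zero_apply, Fin.zero_eta,
          Fin.mk_one, Fin.reduceFinMk, Matrix.cons_val_zero, Matrix.cons_val_one,
          Matrix.head_cons, Matrix.cons_val_two, Matrix.tail_cons, Matrix.cons_val_three]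
        simp only [Algebra.smul_def, map_sub, map_add, map_mul, map_one, map_ofNat,
          map_intCast, hℓ]
        have h8 : (8:K) ≠ 0 := by
          have h8' : (8:K) = 2 * (2 * 2) := by norm_num
          rw [h8']; exact mul_ne_zero hK2 (mul_ne_zero hK2 hK2)
        field_simp
        try ring
        try linear_combination (-16 * (8:K)⁻¹ * ((a:K) * (q:K)^2 + (a:K) * (q:K)^3)) *
              mul_inv_cancel₀ hKq +
            (-2 * ((a:K) * (q:K)^2 + (a:K) * (q:K)^3)) * mul_inv_cancel₀ h8
        try linear_combination (-((a:K) + (a:K) * (q:K))) * inv_mul_cancel₀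
              (show (4:K) ≠ 0 by rw [show (4:K) = 2 * 2 by norm_num]; exact mul_ne_zero hK2 hK2)
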